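/- Let p > 1 be a real number and α a real number with |α| ≠ 1. Define f(t) = Re(1/(1 - α p^{-it})) - 1/2 for real t. Then for every real T, (log p) · ∫_T^{T+1} |f(t)| dt ≤ π + (log p)/2. -/

import Mathlib

open Complex



private lemma exp_theta_abs (θ : ℝ) : ‖Complex.exp (-(I * θ))‖ = 1 := by
  rw [Complex.norm_exp]; simp

private lemma denom_ne_zero {α : ℝ} (hα : |α| ≠ 1) (θ : ℝ) :
    1 - (α : ℂ) * Complex.exp (-(I * θ)) ≠ 0 := by
  intro h
  have h1 : (α : ℂ) * Complex.exp (-(I * θ)) = 1 := by linear_combination -h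
  have h2 := congrArg (‖·‖) h1
  rw [norm_mul, exp_theta_abs, Complex.norm_real, Real.norm_eq_abs, mul_one, norm_one] at h2
  exact hα h2

private lemma re_eq {α : ℝ} (hα : |α| ≠ 1) (θ : ℝ) :
    (1 / (1 - (α : ℂ) * Complex.exp (-(I * θ)))).re - 1 / 2 =
      (1 - α ^ 2) / (2 * Complex.normSq (1 - (α : ℂ) * Complex.exp (-(I * θ)))) := by
  set w : ℂ := (α : ℂ) * Complex.exp (-(I * θ)) with hw
  have hne : 1 - w ≠ 0 := denom_ne_zero hα θ
  have hD : Complex.normSq (1 - w) = 1 + α ^ 2 - 2 * w.re := by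
    rw [Complex.normSq_sub]
    have h1 : Complex.normSq w = α ^ 2 := by
      rw [hw, Complex.normSq_mul, Complex.normSq_eq_norm_sq, Complex.normSq_eq_norm_sq,
        exp_theta_abs, Complex.norm_real, Real.norm_eq_abs]
      simp [sq_abs]
    simp [h1, Complex.normSq_one]
  have hD0 : Complex.normSq (1 - w) ≠ 0 := by
    intro h; exact hne (Complex.normSq_eq_zero.mp h)
  have h2 : 1 + α ^ 2 - 2 * w.re ≠ 0 := hD ▸ hD0
  rw [one_div, Complex.inv_re, hD, sub_re, one_re]
  rw [div_sub_div _ _ h2 two_ne_zero, div_eq_div_iff (mul_ne_zero h2 two_ne_zero) (mul_ne_zero two_ne_zero h2)]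
  ring

private lemma circ_eq {α : ℝ} (hα : |α| ≠ 1) :
    (∮ z in C((0:ℂ), 1), (I * (z - (α:ℂ)))⁻¹) =
      ∫ θ in (0:ℝ)..(2*Real.pi), (1 - (α:ℂ) * Complex.exp (-(I*θ)))⁻¹ := by
  rw [circleIntegral]
  apply intervalIntegral.integral_congr
  intro θ _
  simp only [deriv_circleMap, circleMap, zero_add, ofReal_one, one_mul, smul_eq_mul]
  have he : Complex.exp (θ * I) ≠ 0 := Complex.exp_ne_zero _
  have h1 : Complex.exp (θ*I) - (α:ℂ) ≠ 0 := by
    intro h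
    have h' : (α:ℂ) = Complex.exp (θ*I) := by linear_combination -h
    have h2 := congrArg (‖·‖) h'
    rw [Complex.norm_real, Real.norm_eq_abs, Complex.norm_exp_ofReal_mul_I] at h2
    exact hα h2
  have h2 := denom_ne_zero hα θ
  have hI : (I*(Complex.exp (θ*I) - (α:ℂ))) ≠ 0 := mul_ne_zero I_ne_zero h1
  have key : Complex.exp (-(I*θ)) * Complex.exp (θ*I) = 1 := by
    rw [← Complex.exp_add]; ring_nf; exact Complex.exp_zero
  rw [← div_eq_mul_inv, inv_eq_one_div, div_eq_div_iff hI h2]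
  linear_combination (-(I * (α:ℂ))) * key

private lemma cint_lt {α : ℝ} (h : |α| < 1) :
    (∫ θ in (0:ℝ)..(2*Real.pi), (1 - (α:ℂ) * Complex.exp (-(I*θ)))⁻¹) = 2 * Real.pi := by
  have hα : |α| ≠ 1 := h.ne
  rw [← circ_eq hα]
  have hmem : (α:ℂ) ∈ Metric.ball (0:ℂ) 1 := by
    simp [Complex.norm_real, h]
  calc (∮ z in C((0:ℂ), 1), (I * (z - (α:ℂ)))⁻¹)
      = ∮ z in C((0:ℂ), 1), I⁻¹ * (z - (α:ℂ))⁻¹ := by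
        simp_rw [mul_inv]
    _ = I⁻¹ * ∮ z in C((0:ℂ), 1), (z - (α:ℂ))⁻¹ :=
        circleIntegral.integral_const_mul _ _ _ _
    _ = 2 * Real.pi := by
        rw [circleIntegral.integral_sub_inv_of_mem_ball hmem]
        rw [inv_mul_eq_div]
        exact mul_div_cancel_right₀ _ I_ne_zero

private lemma cint_gt {α : ℝ} (h : 1 < |α|) :
    (∫ θ in (0:ℝ)..(2*Real.pi), (1 - (α:ℂ) * Complex.exp (-(I*θ)))⁻¹) = 0 := by
  have hα : |α| ≠ 1 := h.ne'
  rw [← circ_eq hα]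
  have hd : ∀ z ∈ Metric.closedBall (0:ℂ) 1,
      DifferentiableAt ℂ (fun z : ℂ => (I * (z - (α:ℂ)))⁻¹) z := by
    intro z hz
    have hz1 : ‖z‖ ≤ 1 := by simpa [Metric.mem_closedBall] using hz
    have hne : z - (α:ℂ) ≠ 0 := by
      intro hzero
      have : z = (α:ℂ) := by linear_combination hzero
      rw [this, Complex.norm_real, Real.norm_eq_abs] at hz1
      linarith
    exact (((differentiableAt_id.sub_const _).const_mul I).inv (mul_ne_zero I_ne_zero hne))
  exact circleIntegral_eq_zero_of_differentiable_on_off_countable zero_le_one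
    Set.countable_empty
    (fun z hz => (hd z hz).continuousAt.continuousWithinAt)
    (fun z hz => hd z (Metric.ball_subset_closedBall hz.1))

private lemma cont_inv {α : ℝ} (hα : |α| ≠ 1) :
    Continuous fun θ : ℝ => (1 - (α:ℂ) * Complex.exp (-(I * θ)))⁻¹ := by
  apply Continuous.inv₀
  · exact continuous_const.sub (continuous_const.mul
      (Complex.continuous_exp.comp ((continuous_const.mul Complex.continuous_ofReal).neg)))
  · exact fun θ => denom_ne_zero hα θ

private lemma cont_G {α : ℝ} (hα : |α| ≠ 1) :
    Continuous fun θ : ℝ => (1 / (1 - (α:ℂ) * Complex.exp (-(I * θ)))).re - 1 / 2 := by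
  simp_rw [one_div]
  exact ((Complex.continuous_re.comp (cont_inv hα)).sub continuous_const)

private lemma intG {α : ℝ} (hα : |α| ≠ 1) :
    (∫ θ in (0:ℝ)..(2*Real.pi), ((1 / (1 - (α:ℂ) * Complex.exp (-(I*θ)))).re - 1/2)) =
      if |α| < 1 then Real.pi else -Real.pi := by
  have hint : IntervalIntegrable (fun θ:ℝ => (1 - (α:ℂ) * Complex.exp (-(I*θ)))⁻¹)
      MeasureTheory.volume 0 (2*Real.pi) := (cont_inv hα).intervalIntegrable _ _
  have hre := Complex.reCLM.intervalIntegral_comp_comm hint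
  have h1 : (∫ θ in (0:ℝ)..(2*Real.pi), ((1 / (1 - (α:ℂ) * Complex.exp (-(I*θ)))).re - 1/2))
      = (∫ θ in (0:ℝ)..(2*Real.pi), ((1 - (α:ℂ) * Complex.exp (-(I*θ)))⁻¹).re)
        - ∫ θ in (0:ℝ)..(2*Real.pi), (1/2 : ℝ) := by
    have hc : Continuous fun θ:ℝ => ((1 - (α:ℂ) * Complex.exp (-(I*θ)))⁻¹).re :=
      Complex.continuous_re.comp (cont_inv hα)
    rw [← intervalIntegral.integral_sub (hc.intervalIntegrable _ _) (intervalIntegrable_const)]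
    simp_rw [one_div]
  have h2 : (∫ θ in (0:ℝ)..(2*Real.pi), (1/2 : ℝ)) = Real.pi := by
    simp [intervalIntegral.integral_const]
    ring
  rcases hα.lt_or_gt with h | h
  · rw [if_pos h, h1, h2]
    have : (∫ θ in (0:ℝ)..(2*Real.pi), ((1 - (α:ℂ) * Complex.exp (-(I*θ)))⁻¹).re)
        = (2 * Real.pi : ℝ) := by
      have := hre
      simp only [Complex.reCLM_apply] at this
      rw [this, cint_lt h]
      simp
    rw [this]; ring
  · rw [if_neg (not_lt.mpr h.le), h1, h2]
    have : (∫ θ in (0:ℝ)..(2*Real.pi), ((1 - (α:ℂ) * Complex.exp (-(I*θ)))⁻¹).re)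
        = 0 := by
      have := hre
      simp only [Complex.reCLM_apply] at this
      rw [this, cint_gt h]
      simp
    rw [this]; ring

private lemma intAbsG {α : ℝ} (hα : |α| ≠ 1) :
    (∫ θ in (0:ℝ)..(2*Real.pi), |(1 / (1 - (α:ℂ) * Complex.exp (-(I*θ)))).re - 1/2|) =
      Real.pi := by
  rcases hα.lt_or_gt with h | h
  · have hpos : ∀ θ : ℝ, 0 ≤ (1 / (1 - (α:ℂ) * Complex.exp (-(I*θ)))).re - 1/2 := by
      intro θ
      rw [re_eq hα θ]
      have hα2 : α ^ 2 ≤ 1 := by nlinarith [_root_.sq_abs α, abs_nonneg α]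
      exact div_nonneg (by linarith) (by nlinarith [Complex.normSq_nonneg (1 - (α:ℂ) * Complex.exp (-(I*θ)))])
    rw [intervalIntegral.integral_congr (g := fun θ:ℝ =>
        ((1 / (1 - (α:ℂ) * Complex.exp (-(I*θ)))).re - 1/2))
        (fun θ _ => _root_.abs_of_nonneg (hpos θ)), intG hα, if_pos h]
  · have hneg : ∀ θ : ℝ, (1 / (1 - (α:ℂ) * Complex.exp (-(I*θ)))).re - 1/2 ≤ 0 := by
      intro θ
      rw [re_eq hα θ]
      have hα2 : 1 ≤ α ^ 2 := by nlinarith [_root_.sq_abs α, abs_nonneg α]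
      exact div_nonpos_of_nonpos_of_nonneg (by linarith) (by nlinarith [Complex.normSq_nonneg (1 - (α:ℂ) * Complex.exp (-(I*θ)))])
    rw [intervalIntegral.integral_congr (g := fun θ:ℝ =>
        -((1 / (1 - (α:ℂ) * Complex.exp (-(I*θ)))).re - 1/2))
        (fun θ _ => _root_.abs_of_nonpos (hneg θ)), intervalIntegral.integral_neg, intG hα,
      if_neg (not_lt.mpr h.le), neg_neg]

private lemma periodicAbsG {α : ℝ} :
    Function.Periodic (fun θ : ℝ => |(1 / (1 - (α:ℂ) * Complex.exp (-(I*θ)))).re - 1/2|)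
      (2 * Real.pi) := by
  intro θ
  have : Complex.exp (-(I * ((θ + 2*Real.pi : ℝ) : ℂ))) = Complex.exp (-(I * θ)) := by
    have h2 : Complex.exp (((-1 : ℤ) : ℂ) * (2 * Real.pi * I)) = 1 :=
      Complex.exp_int_mul_two_pi_mul_I (-1)
    rw [show -(I * ((θ + 2*Real.pi : ℝ) : ℂ)) = -(I * θ) + ((-1 : ℤ) : ℂ) * (2 * Real.pi * I) by
      push_cast; ring, Complex.exp_add, h2, mul_one]
  simp only [this]

theorem integral_abs_re_inv_one_sub_cpow_le {p α : ℝ} (hp : 1 < p) (hα : |α| ≠ 1) (T : ℝ) :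
    Real.log p *
      ∫ t in T..(T + 1),
        |((1 / (1 - (α : ℂ) * (p : ℂ) ^ (-(Complex.I * (t : ℂ))))).re - 1 / 2)| ≤
      Real.pi + Real.log p / 2 := by
  set L : ℝ := Real.log p with hLdef
  have hL : 0 < L := Real.log_pos hp
  set F : ℝ → ℝ := fun θ : ℝ => |(1 / (1 - (α:ℂ) * Complex.exp (-(I*θ)))).re - 1/2| with hF
  have hFcont : Continuous F := (cont_G hα).abs
  have hFint : ∀ a b : ℝ, IntervalIntegrable F MeasureTheory.volume a b :=
    fun a b => hFcont.intervalIntegrable a b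
  have hFnonneg : ∀ θ, 0 ≤ F θ := fun θ => abs_nonneg _
  have hp0 : (p : ℂ) ≠ 0 := by
    simp only [ne_eq, ofReal_eq_zero]; linarith
  -- rewrite the integrand
  have hsub : ∀ t : ℝ, (p : ℂ) ^ (-(Complex.I * (t : ℂ))) =
      Complex.exp (-(I * ((L * t : ℝ) : ℂ))) := by
    intro t
    rw [Complex.cpow_def_of_ne_zero hp0]
    congr 1
    rw [← Complex.ofReal_log (by linarith : (0:ℝ) ≤ p)]
    push_cast
    ring
  have hintegrand : (∫ t in T..(T + 1),
        |((1 / (1 - (α : ℂ) * (p : ℂ) ^ (-(Complex.I * (t : ℂ))))).re - 1 / 2)|)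
      = ∫ t in T..(T + 1), F (L * t) := by
    apply intervalIntegral.integral_congr
    intro t _
    simp only [hF, hsub t]
  -- substitution
  have hsubst : (∫ t in T..(T + 1), F (L * t)) = L⁻¹ * ∫ x in (L*T)..(L*(T+1)), F x := by
    rw [intervalIntegral.integral_comp_mul_left F hL.ne']
    simp
  have hmain : L * (∫ t in T..(T + 1), F (L * t)) = ∫ x in (L*T)..(L*T + L), F x := by
    rw [hsubst, ← mul_assoc, mul_inv_cancel₀ hL.ne', one_mul, mul_add, mul_one]
  -- the counting bound
  set N : ℤ := ⌈L / (2 * Real.pi)⌉ with hN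
  have hπ : (0:ℝ) < Real.pi := Real.pi_pos
  have hNlb : L / (2 * Real.pi) ≤ (N : ℝ) := Int.le_ceil _
  have hNub : (N : ℝ) < L / (2 * Real.pi) + 1 := Int.ceil_lt_add_one _
  have hLN : L ≤ (N : ℝ) * (2 * Real.pi) := by
    rw [div_le_iff₀ (by positivity)] at hNlb
    linarith
  have h1 : (∫ x in (L*T)..(L*T + L), F x) ≤ ∫ x in (L*T)..(L*T + N • (2 * Real.pi)), F x := by
    apply intervalIntegral.integral_mono_interval le_rfl (by linarith)
      (by rw [zsmul_eq_mul]; linarith)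
      (MeasureTheory.ae_of_all _ hFnonneg) (hFint _ _)
  have h2 : (∫ x in (L*T)..(L*T + N • (2 * Real.pi)), F x) = (N : ℝ) * Real.pi := by
    rw [periodicAbsG.intervalIntegral_add_zsmul_eq N (L*T) hFint,
      periodicAbsG.intervalIntegral_add_eq (L*T) 0, zero_add, intAbsG hα]
    simp [zsmul_eq_mul]
  have h3 : (N : ℝ) * Real.pi ≤ Real.pi + L / 2 := by
    have hdiv : L / (2 * Real.pi) * Real.pi = L / 2 := by
      field_simp
    nlinarith
  calc L * (∫ t in T..(T + 1),
        |((1 / (1 - (α : ℂ) * (p : ℂ) ^ (-(Complex.I * (t : ℂ))))).re - 1 / 2)|)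
      = ∫ x in (L*T)..(L*T + L), F x := by rw [hintegrand, hmain]
    _ ≤ (N : ℝ) * Real.pi := h2 ▸ h1
    _ ≤ Real.pi + L / 2 := h3
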